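/- Let K be a nonempty finite set partitioned into a nonempty subset K_W and a subset K_B, with I_W the associated 0/1 diagonal matrix, let V ∈ ℝ^{K×K}, λ > 0 and μ(i) > 0 for i ≥ 1, and assume that λ·I_W − V and (λ+μ(i))·I_W − V are invertible for every i ≥ 1. Define W := λ·(λ·I_W − V)^{-1}·I_W, and matrices U^{(i,n)} for i ≥ 1, n ≥ 0 by U^{(i,0)} := μ(i)·((λ+μ(i))·I_W − V)^{-1}·I_W and U^{(i,n+1)} := ((λ+μ(i))·I_W − V)^{-1}·λ·I_W·U^{(i+1,n)}. For n ≥ 0 set M^{(n)} := W·U^{(1,n)} + Σ_{i=1}^{n+1} ( ∏_{j=1}^{i} λ/μ(j) )·U^{(i,n−i+1)}. Then for every n ≥ 0: M^{(n)} = ( ∏_{i=1}^{n} λ/μ(i) )·λ·(λ·I_W − V)^{-1}·I_W; in particular M^{(0)} = λ·(λ·I_W − V)^{-1}·I_W and M^{(n)} = ( ∏_{i=1}^{n} λ/μ(i) )·M^{(0)}. -/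

import Mathlib

/-- For the M/M/1 loss system in a random environment, the matrices
M^(n) = W·U^(1,n) + Σ_{i=1}^{n+1} (∏_{j=1}^i λ/μ(j))·U^(i,n−i+1) satisfy
M^(n) = (∏_{i=1}^n λ/μ(i))·λ·(λ·I_W − V)⁻¹·I_W = (∏_{i=1}^n λ/μ(i))·M^(0). -/
theorem stmt_12 {K : Type*} [Fintype K] [DecidableEq K] [Nonempty K]
    (KW KB : Set K) [∀ k, Decidable (k ∈ KW)] (hKW : KW.Nonempty)
    (hpart : ∀ k : K, k ∈ KW ↔ k ∉ KB)
    (IW : Matrix K K ℝ)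
    (hIW : IW = Matrix.diagonal (fun k => if k ∈ KW then (1:ℝ) else 0))
    (V : Matrix K K ℝ)
    (lam : ℝ) (hlam : 0 < lam)
    (mu : ℕ → ℝ) (hmu : ∀ i, 1 ≤ i → 0 < mu i)
    (hinv0 : IsUnit (lam • IW - V))
    (hinv : ∀ i, 1 ≤ i → IsUnit ((lam + mu i) • IW - V))
    (W : Matrix K K ℝ) (hW : W = lam • ((lam • IW - V)⁻¹ * IW))
    (U : ℕ → ℕ → Matrix K K ℝ)
    (hU0 : ∀ i, 1 ≤ i → U i 0 = mu i • (((lam + mu i) • IW - V)⁻¹ * IW))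
    (hUs : ∀ i n, 1 ≤ i →
      U i (n + 1) = ((lam + mu i) • IW - V)⁻¹ * (lam • IW) * U (i + 1) n)
    (Mn : ℕ → Matrix K K ℝ)
    (hMn : ∀ n, Mn n = W * U 1 n +
      ∑ i ∈ Finset.Icc 1 (n + 1),
        (∏ j ∈ Finset.Icc 1 i, lam / mu j) • U i (n + 1 - i)) :
    (∀ n, Mn n = (∏ i ∈ Finset.Icc 1 n, lam / mu i) •
        (lam • ((lam • IW - V)⁻¹ * IW))) ∧
    Mn 0 = lam • ((lam • IW - V)⁻¹ * IW) ∧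
    (∀ n, Mn n = (∏ i ∈ Finset.Icc 1 n, lam / mu i) • Mn 0) := by
  have hB : ((lam • IW - V)⁻¹ : Matrix K K ℝ) * (lam • IW - V) = 1 :=
    Matrix.nonsing_inv_mul _ ((Matrix.isUnit_iff_isUnit_det _).mp hinv0)
  -- core identity
  have core : ∀ i, 1 ≤ i → ∀ X : Matrix K K ℝ,
      W * (((lam + mu i) • IW - V)⁻¹ * X)
        + (lam / mu i) • (((lam + mu i) • IW - V)⁻¹ * X)
      = (lam / mu i) • ((lam • IW - V)⁻¹ * X) := by
    intro i hi X
    have hmune : mu i ≠ 0 := (hmu i hi).ne'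
    have hCi : ((lam + mu i) • IW - V) * ((lam + mu i) • IW - V)⁻¹ = 1 :=
      Matrix.mul_nonsing_inv _ ((Matrix.isUnit_iff_isUnit_det _).mp (hinv i hi))
    set A := ((lam + mu i) • IW - V)⁻¹ with hA
    have hC : (lam + mu i) • IW - V = mu i • IW + (lam • IW - V) := by
      rw [add_smul]; abel
    have hCX : (mu i • IW + (lam • IW - V)) * (A * X) = X := by
      rw [← hC, ← mul_assoc, hCi, one_mul]
    have key0 : mu i • ((lam • IW - V)⁻¹ * (IW * (A * X))) + A * X
        = (lam • IW - V)⁻¹ * X := by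
      calc mu i • ((lam • IW - V)⁻¹ * (IW * (A * X))) + A * X
          = (lam • IW - V)⁻¹ * ((mu i • IW) * (A * X))
            + (lam • IW - V)⁻¹ * ((lam • IW - V) * (A * X)) := by
            rw [← mul_assoc _ (lam • IW - V) _, hB, one_mul, smul_mul_assoc,
              mul_smul_comm]
        _ = (lam • IW - V)⁻¹ * ((mu i • IW + (lam • IW - V)) * (A * X)) := by
            rw [← mul_add, add_mul]
        _ = (lam • IW - V)⁻¹ * X := by rw [hCX]
    calc W * (A * X) + (lam / mu i) • (A * X)
        = (lam / mu i) • (mu i • ((lam • IW - V)⁻¹ * (IW * (A * X))) + A * X) := by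
          rw [smul_add, smul_smul, div_mul_cancel₀ _ hmune, hW, smul_mul_assoc,
            mul_assoc]
      _ = (lam / mu i) • ((lam • IW - V)⁻¹ * X) := by rw [key0]
  -- key lemma (range form, shifted)
  have key : ∀ n s : ℕ,
      W * U (s + 1) n
        + ∑ i ∈ Finset.range (n + 1),
            (∏ j ∈ Finset.range (i + 1), lam / mu (s + 1 + j)) • U (s + 1 + i) (n - i)
      = (∏ i ∈ Finset.range n, lam / mu (s + 1 + i)) •
          (lam • ((lam • IW - V)⁻¹ * IW)) := by
    intro n
    induction n with
    | zero =>
      intro s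
      have hmune : mu (s + 1) ≠ 0 := (hmu (s + 1) (by omega)).ne'
      simp only [zero_add, Finset.sum_range_one, Finset.prod_range_one,
        Nat.add_zero, Nat.sub_zero, Finset.range_zero, Finset.prod_empty, one_smul]
      rw [hU0 (s + 1) (by omega)]
      have h := core (s + 1) (by omega) (mu (s + 1) • IW)
      simp only [mul_smul_comm] at h ⊢
      rw [h, smul_smul, div_mul_cancel₀ _ hmune]
    | succ n ih =>
      intro s
      have hmune : mu (s + 1) ≠ 0 := (hmu (s + 1) (by omega)).ne'
      rw [Finset.sum_range_succ']
      -- rewrite the shifted terms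
      have hterm : ∀ i,
          (∏ j ∈ Finset.range (i + 1 + 1), lam / mu (s + 1 + j)) •
              U (s + 1 + (i + 1)) (n + 1 - (i + 1))
          = (lam / mu (s + 1)) •
              ((∏ j ∈ Finset.range (i + 1), lam / mu (s + 1 + 1 + j)) •
                U (s + 1 + 1 + i) (n - i)) := by
        intro i
        have h1 : s + 1 + (i + 1) = s + 1 + 1 + i := by omega
        have h2 : n + 1 - (i + 1) = n - i := by omega
        have hq : (∏ j ∈ Finset.range (i + 1 + 1), lam / mu (s + 1 + j))
            = (lam / mu (s + 1)) * ∏ j ∈ Finset.range (i + 1), lam / mu (s + 1 + 1 + j) := by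
          rw [Finset.prod_range_succ', mul_comm]
          congr 1
          exact Finset.prod_congr rfl fun j _ => by
            rw [show s + 1 + (j + 1) = s + 1 + 1 + j from by omega]
        rw [h1, h2, hq, ← smul_smul]
      simp only [hterm]
      simp only [zero_add, Finset.prod_range_one, Nat.add_zero, Nat.sub_zero]
      rw [hUs (s + 1) n (by omega)]
      -- combine W-term and i=0 term with core
      have hcomb := core (s + 1) (by omega) ((lam • IW) * U (s + 1 + 1) n)
      rw [mul_assoc] at *
      have lhsEq : W * (((lam + mu (s+1)) • IW - V)⁻¹ * (lam • IW * U (s + 1 + 1) n))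
            + ((∑ i ∈ Finset.range (n + 1),
                (lam / mu (s + 1)) •
                  ((∏ j ∈ Finset.range (i + 1), lam / mu (s + 1 + 1 + j)) •
                    U (s + 1 + 1 + i) (n - i)))
              + (lam / mu (s + 1)) •
                  (((lam + mu (s+1)) • IW - V)⁻¹ * (lam • IW * U (s + 1 + 1) n)))
          = (lam / mu (s + 1)) •
              (W * U (s + 1 + 1) n
                + ∑ i ∈ Finset.range (n + 1),
                    (∏ j ∈ Finset.range (i + 1), lam / mu (s + 1 + 1 + j)) •
                      U (s + 1 + 1 + i) (n - i)) := by
        have hmid : ((lam • IW - V)⁻¹ : Matrix K K ℝ) * (lam • IW * U (s + 1 + 1) n)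
            = W * U (s + 1 + 1) n := by
          simp only [hW, smul_mul_assoc, mul_smul_comm, mul_assoc]
        rw [← add_assoc, add_comm (W * _) _, add_assoc, add_comm _ (W * _ + _), hcomb,
          hmid, smul_add, ← Finset.smul_sum]
      rw [lhsEq, ih s.succ]  -- careful: ih at shift s+1
      rw [smul_smul, Finset.prod_range_succ', Nat.add_zero, mul_comm]
      congr 2
      exact Finset.prod_congr rfl fun j _ => by rw [show s+1+(j+1) = s+1+1+j by omega]
  -- convert Icc to range
  have hIccProd : ∀ m : ℕ, ∀ f : ℕ → ℝ,
      ∏ j ∈ Finset.Icc 1 m, f j = ∏ j ∈ Finset.range m, f (1 + j) := by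
    intro m f
    rw [← Finset.Ico_add_one_right_eq_Icc, Finset.prod_Ico_eq_prod_range]
    rfl
  have main : ∀ n, Mn n = (∏ i ∈ Finset.Icc 1 n, lam / mu i) •
      (lam • ((lam • IW - V)⁻¹ * IW)) := by
    intro n
    rw [hMn n, hIccProd n]
    have hsum : ∑ i ∈ Finset.Icc 1 (n + 1),
        (∏ j ∈ Finset.Icc 1 i, lam / mu j) • U i (n + 1 - i)
        = ∑ i ∈ Finset.range (n + 1),
            (∏ j ∈ Finset.range (i + 1), lam / mu (0 + 1 + j)) •
              U (0 + 1 + i) (n - i) := by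
      rw [← Finset.Ico_add_one_right_eq_Icc, Finset.sum_Ico_eq_sum_range]
      refine Finset.sum_congr rfl fun i _ => ?_
      rw [hIccProd (1 + i)]
      have h1 : (0:ℕ) + 1 + i = 1 + i := by omega
      have h2 : n + 1 - (1 + i) = n - i := by omega
      rw [h1, h2, add_comm 1 i]
    rw [hsum]
    have := key n 0
    simp only [Nat.zero_add] at this ⊢
    rw [show (U 1 n) = U (0+1) n by norm_num] at *
    rw [this]
  refine ⟨main, ?_, ?_⟩
  · have := main 0
    simpa using this
  · intro n
    rw [main n, main 0]
    simp
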